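/- On the two-dimensional torus 𝕋²=ℝ²/ℤ² with Lebesgue measure, let T_{0,1}(x,y)=(3x+y, 2x+y) mod 1 be the automorphism given by the matrix [[3,1],[2,1]], let T_{1,0}(x,y)=(x+1/2, y), let P be the two-set partition {[0,1/2)×[0,1), [1/2,1)×[0,1)}, and let I₁ be the σ-algebra of Borel sets invariant under T_{1,0}. Then for every ℓ ∈ ℤ, the σ-algebra generated by I₁ together with the partition T_{0,-ℓ}(P) is the whole Borel σ-algebra of 𝕋², modulo Lebesgue-null sets. -/

import Mathlib

open MeasureTheory
open scoped symmDiff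

/-- The σ-algebra of subsets of `X` that are `m`-measurable and invariant under every map
of the family `U : ι → X → X`. -/
def invariantSets {X ι : Type*} (m : MeasurableSpace X) (U : ι → X → X) :
    MeasurableSpace X where
  MeasurableSet' s := MeasurableSet[m] s ∧ ∀ i, U i ⁻¹' s = s
  measurableSet_empty := ⟨m.measurableSet_empty, fun _ => by simp⟩
  measurableSet_compl := fun s hs =>
    ⟨m.measurableSet_compl s hs.1, fun i => by rw [Set.preimage_compl, hs.2 i]⟩
  measurableSet_iUnion := fun f hf =>
    ⟨m.measurableSet_iUnion f (fun n => (hf n).1), fun i => by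
      rw [Set.preimage_iUnion]
      exact Set.iUnion_congr fun n => (hf n).2 i⟩

/-- The automorphism of the two-dimensional torus given by the matrix `[[3,1],[2,1]]`,
i.e. `T_{0,1}(x,y) = (3x + y, 2x + y)`, as an invertible map. -/
noncomputable def torusAut : Equiv.Perm (UnitAddCircle × UnitAddCircle) where
  toFun p := ((3 : ℤ) • p.1 + p.2, (2 : ℤ) • p.1 + p.2)
  invFun p := (p.1 - p.2, (-2 : ℤ) • p.1 + (3 : ℤ) • p.2)
  left_inv p := by
    refine Prod.ext ?_ ?_
    · show ((3 : ℤ) • p.1 + p.2) - ((2 : ℤ) • p.1 + p.2) = p.1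
      abel
    · show (-2 : ℤ) • ((3 : ℤ) • p.1 + p.2) + (3 : ℤ) • ((2 : ℤ) • p.1 + p.2) = p.2
      simp only [smul_add, smul_smul]
      abel
  right_inv p := by
    refine Prod.ext ?_ ?_
    · show (3 : ℤ) • (p.1 - p.2) + ((-2 : ℤ) • p.1 + (3 : ℤ) • p.2) = p.1
      simp only [smul_sub]
      abel
    · show (2 : ℤ) • (p.1 - p.2) + ((-2 : ℤ) • p.1 + (3 : ℤ) • p.2) = p.2
      simp only [smul_sub]
      abel

/-- The translation `T_{1,0}(x,y) = (x + 1/2, y)` of the two-dimensional torus. -/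
noncomputable def torusTranslation : UnitAddCircle × UnitAddCircle →
    UnitAddCircle × UnitAddCircle :=
  fun p => (p.1 + ((1 / 2 : ℝ) : UnitAddCircle), p.2)

/-- The first piece `[0, 1/2) × [0, 1)` of the partition `P` of the torus. -/
def torusHalf₁ : Set (UnitAddCircle × UnitAddCircle) :=
  ((fun r : ℝ => (r : UnitAddCircle)) '' Set.Ico (0 : ℝ) (1 / 2)) ×ˢ Set.univ

/-- The second piece `[1/2, 1) × [0, 1)` of the partition `P` of the torus. -/
def torusHalf₂ : Set (UnitAddCircle × UnitAddCircle) :=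
  ((fun r : ℝ => (r : UnitAddCircle)) '' Set.Ico (1 / 2 : ℝ) 1) ×ˢ Set.univ

section Aux
open Set

noncomputable def circRep (x : UnitAddCircle) : ℝ := (AddCircle.equivIco 1 0 x : ℝ)

lemma circRep_mem (x : UnitAddCircle) : circRep x ∈ Ico (0:ℝ) 1 := by
  have h := (AddCircle.equivIco 1 0 x).2
  simpa [circRep] using h

lemma coe_circRep (x : UnitAddCircle) : ((circRep x : ℝ) : UnitAddCircle) = x := by
  exact (AddCircle.equivIco 1 0).symm_apply_apply x

lemma measurable_circRep : Measurable circRep :=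
  measurable_subtype_coe.comp (AddCircle.measurableEquivIco (T := 1) 0).measurable

def halfSet : Set UnitAddCircle := (fun r : ℝ => (r : UnitAddCircle)) '' Ico (0:ℝ) (1/2)

lemma mem_halfSet_iff (x : UnitAddCircle) : x ∈ halfSet ↔ circRep x < 1/2 := by
  constructor
  · rintro ⟨r, hr, rfl⟩
    have h1 : r ∈ Ico (0:ℝ) (0 + 1) := by
      constructor <;> [exact hr.1; linarith [hr.2]]
    have h2 : circRep ((r : ℝ) : UnitAddCircle) ∈ Ico (0:ℝ) (0+1) := by
      simpa using circRep_mem _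
    have := (AddCircle.coe_eq_coe_iff_of_mem_Ico h2 h1).mp (coe_circRep _)
    rw [this]; exact hr.2
  · intro h
    exact ⟨circRep x, ⟨(circRep_mem x).1, h⟩, coe_circRep x⟩

lemma measurableSet_halfSet : MeasurableSet halfSet := by
  have : halfSet = circRep ⁻¹' Iio (1/2) := by
    ext x; simpa using mem_halfSet_iff x
  rw [this]; exact measurable_circRep measurableSet_Iio

lemma add_half_mem_halfSet_iff (x : UnitAddCircle) :
    x + ((1/2 : ℝ) : UnitAddCircle) ∈ halfSet ↔ x ∉ halfSet := by
  have hx := circRep_mem x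
  have hcoe : x + ((1/2 : ℝ) : UnitAddCircle) = ((circRep x + 1/2 : ℝ) : UnitAddCircle) := by
    rw [AddCircle.coe_add, coe_circRep]
  rcases lt_or_ge (circRep x) (1/2) with h | h
  · have hxS : x ∈ halfSet := (mem_halfSet_iff x).mpr h
    have hnot : x + ((1/2 : ℝ) : UnitAddCircle) ∉ halfSet := by
      intro hc
      rw [hcoe] at hc
      rcases hc with ⟨r, hr, hrc⟩
      have h1 : r ∈ Ico (0:ℝ) (0 + 1) := by constructor <;> [exact hr.1; linarith [hr.2]]
      have h2 : circRep x + 1/2 ∈ Ico (0:ℝ) (0 + 1) := by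
        constructor <;> [linarith [hx.1]; linarith]
      have := (AddCircle.coe_eq_coe_iff_of_mem_Ico h1 h2).mp hrc
      linarith [hr.2, hx.1]
    exact iff_of_false hnot (not_not_intro hxS)
  · have hxS : x ∉ halfSet := by rw [mem_halfSet_iff]; linarith
    have hone : ((1:ℝ) : UnitAddCircle) = 0 := AddCircle.coe_period (p := (1:ℝ))
    have hmem : x + ((1/2 : ℝ) : UnitAddCircle) ∈ halfSet := by
      have heq : ((circRep x + 1/2 : ℝ) : UnitAddCircle) = ((circRep x - 1/2 : ℝ) : UnitAddCircle) := by
        have : (circRep x + 1/2 : ℝ) = (circRep x - 1/2) + 1 := by ring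
        rw [this, AddCircle.coe_add, hone, add_zero]
      rw [hcoe, heq]
      exact ⟨circRep x - 1/2, ⟨by linarith, by linarith [hx.2]⟩, rfl⟩
    exact iff_of_true hmem hxS

end Aux

section Aux2
open Set

noncomputable def translPerm : Equiv.Perm (UnitAddCircle × UnitAddCircle) :=
  (Equiv.addRight ((1/2 : ℝ) : UnitAddCircle)).prodCongr (Equiv.refl _)

lemma translPerm_coe : ⇑translPerm = torusTranslation := rfl

lemma two_smul_half : ((1/2 : ℝ) : UnitAddCircle) + ((1/2 : ℝ) : UnitAddCircle) = 0 := by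
  rw [← AddCircle.coe_add]
  norm_num

lemma commute_transl_aut : Commute translPerm torusAut := by
  apply Equiv.ext
  intro p
  rw [Equiv.Perm.mul_apply, Equiv.Perm.mul_apply]
  show translPerm (torusAut p) = torusAut (translPerm p)
  have h2 : (2:ℤ) • ((1/2 : ℝ) : UnitAddCircle) = 0 := by
    rw [two_zsmul]; exact two_smul_half
  have h3 : (3:ℤ) • ((1/2 : ℝ) : UnitAddCircle) = ((1/2 : ℝ) : UnitAddCircle) := by
    have : (3:ℤ) = 2 + 1 := by norm_num
    rw [this, add_zsmul, h2, one_zsmul, zero_add]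
  refine Prod.ext ?_ ?_
  · show ((3:ℤ) • p.1 + p.2) + ((1/2 : ℝ) : UnitAddCircle)
        = (3:ℤ) • (p.1 + ((1/2 : ℝ) : UnitAddCircle)) + p.2
    rw [smul_add, h3]; abel
  · show (2:ℤ) • p.1 + p.2 = (2:ℤ) • (p.1 + ((1/2 : ℝ) : UnitAddCircle)) + p.2
    rw [smul_add, h2, add_zero]

lemma commute_transl_aut_zpow (ℓ : ℤ) (x : UnitAddCircle × UnitAddCircle) :
    torusTranslation ((torusAut ^ ℓ) x) = (torusAut ^ ℓ) (torusTranslation x) := by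
  have h := (commute_transl_aut.zpow_right ℓ).eq
  have := congrArg (fun σ : Equiv.Perm (UnitAddCircle × UnitAddCircle) => σ x) h
  simpa [Equiv.Perm.mul_apply, translPerm_coe] using this

lemma measurable_torusTranslation : Measurable torusTranslation := by
  apply Continuous.measurable
  exact (continuous_fst.add continuous_const).prodMk continuous_snd

lemma torusTranslation_involutive : ∀ x, torusTranslation (torusTranslation x) = x := by
  intro x
  show (x.1 + _ + _, x.2) = x
  rw [add_assoc, two_smul_half, add_zero]

lemma measurable_torusAut : Measurable ⇑torusAut := by
  apply Continuous.measurable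
  exact (((continuous_zsmul (3:ℤ)).comp continuous_fst).add continuous_snd).prodMk
    (((continuous_zsmul (2:ℤ)).comp continuous_fst).add continuous_snd)

lemma measurable_torusAut_inv : Measurable ⇑(torusAut⁻¹) := by
  apply Continuous.measurable
  show Continuous fun p : UnitAddCircle × UnitAddCircle =>
    (p.1 - p.2, (-2 : ℤ) • p.1 + (3 : ℤ) • p.2)
  exact (continuous_fst.sub continuous_snd).prodMk
    (((continuous_zsmul (-2:ℤ)).comp continuous_fst).add
      ((continuous_zsmul (3:ℤ)).comp continuous_snd))

lemma measurable_torusAut_zpow (ℓ : ℤ) : Measurable ⇑(torusAut ^ ℓ) := by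
  induction ℓ using Int.induction_on with
  | zero => simpa using measurable_id
  | succ n ih =>
    rw [zpow_add_one]
    exact ih.comp measurable_torusAut
  | pred n ih =>
    rw [zpow_sub_one]
    exact ih.comp measurable_torusAut_inv

lemma measurableSet_torusHalf₁ : MeasurableSet torusHalf₁ :=
  measurableSet_halfSet.prod MeasurableSet.univ

lemma transl_preimage_torusHalf₁ : torusTranslation ⁻¹' torusHalf₁ = torusHalf₁ᶜ := by
  ext p
  simp only [torusHalf₁, torusTranslation, Set.mem_preimage, Set.mem_prod, Set.mem_univ,
    and_true, Set.mem_compl_iff]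
  exact add_half_mem_halfSet_iff p.1

lemma transl_preimage_A (ℓ : ℤ) :
    torusTranslation ⁻¹' (⇑(torusAut ^ ℓ) ⁻¹' torusHalf₁) =
      (⇑(torusAut ^ ℓ) ⁻¹' torusHalf₁)ᶜ := by
  ext x
  simp only [Set.mem_preimage, Set.mem_compl_iff]
  rw [← commute_transl_aut_zpow ℓ x, ← Set.mem_preimage (f := torusTranslation),
    transl_preimage_torusHalf₁]
  rfl

end Aux2


theorem invariantSets_measurableSet {X ι : Type*} {m : MeasurableSpace X} {U : ι → X → X}
    {s : Set X} (h1 : MeasurableSet[m] s) (h2 : ∀ i, U i ⁻¹' s = s) :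
    MeasurableSet[invariantSets m U] s := ⟨h1, h2⟩

theorem measurableSet_of_le {X : Type*} {m₁ m₂ : MeasurableSpace X} (h : m₁ ≤ m₂)
    {s : Set X} (hs : MeasurableSet[m₁] s) : MeasurableSet[m₂] s := h s hs

/-- **The σ-algebra generated by `I₁` and `T_{0,-ℓ}(P)` is everything.**
On the torus `𝕋²` with the automorphism `T_{0,1}(x,y) = (3x+y, 2x+y)`, the translation
`T_{1,0}(x,y) = (x + 1/2, y)`, the partition `P = {[0,1/2)×[0,1), [1/2,1)×[0,1)}` and the
σ-algebra `I₁` of Borel sets invariant under `T_{1,0}`, for every `ℓ ∈ ℤ` the σ-algebra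
generated by `I₁` and the partition `T_{0,-ℓ}(P)` (whose pieces are the preimages of the
pieces of `P` under `T_{0,1}^ℓ`) is the whole Borel σ-algebra, modulo Lebesgue-null
sets. -/
theorem torus_invariants_join_partition_generates_borel (ℓ : ℤ) :
    ∀ s : Set (UnitAddCircle × UnitAddCircle), MeasurableSet s →
      ∃ t : Set (UnitAddCircle × UnitAddCircle),
        MeasurableSet[invariantSets inferInstance (fun _ : Unit => torusTranslation) ⊔
          MeasurableSpace.generateFrom
            {⇑(torusAut ^ ℓ) ⁻¹' torusHalf₁, ⇑(torusAut ^ ℓ) ⁻¹' torusHalf₂}] t ∧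
        ((volume : Measure UnitAddCircle).prod (volume : Measure UnitAddCircle))
          (s ∆ t) = 0 := by
  intro s hs
  classical
  refine ⟨s, ?_, by simp [symmDiff_self]⟩
  have hAτ : torusTranslation ⁻¹' (⇑(torusAut ^ ℓ) ⁻¹' torusHalf₁) =
      (⇑(torusAut ^ ℓ) ⁻¹' torusHalf₁)ᶜ := transl_preimage_A ℓ
  have hA_borel : MeasurableSet (⇑(torusAut ^ ℓ) ⁻¹' torusHalf₁) :=
    measurable_torusAut_zpow ℓ measurableSet_torusHalf₁
  have hA_M : MeasurableSet[invariantSets inferInstance (fun _ : Unit => torusTranslation) ⊔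
      MeasurableSpace.generateFrom
        {⇑(torusAut ^ ℓ) ⁻¹' torusHalf₁, ⇑(torusAut ^ ℓ) ⁻¹' torusHalf₂}] (⇑(torusAut ^ ℓ) ⁻¹' torusHalf₁) :=
    measurableSet_of_le le_sup_right
      (MeasurableSpace.measurableSet_generateFrom (Set.mem_insert _ _))
  have hinv : ∀ u : Set (UnitAddCircle × UnitAddCircle),
      torusTranslation ⁻¹' (u ∪ torusTranslation ⁻¹' u) = u ∪ torusTranslation ⁻¹' u := by
    intro u
    rw [Set.preimage_union, Set.preimage_preimage]
    have h1 : (fun x => torusTranslation (torusTranslation x)) ⁻¹' u = u := by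
      ext x; simp [torusTranslation_involutive x]
    rw [h1, Set.union_comm]
  have hs₁_M : MeasurableSet[invariantSets inferInstance (fun _ : Unit => torusTranslation) ⊔
      MeasurableSpace.generateFrom
        {⇑(torusAut ^ ℓ) ⁻¹' torusHalf₁, ⇑(torusAut ^ ℓ) ⁻¹' torusHalf₂}]
      ((s ∩ ⇑(torusAut ^ ℓ) ⁻¹' torusHalf₁) ∪
        torusTranslation ⁻¹' (s ∩ ⇑(torusAut ^ ℓ) ⁻¹' torusHalf₁)) :=
    measurableSet_of_le le_sup_left (invariantSets_measurableSet
      ((hs.inter hA_borel).union (measurable_torusTranslation (hs.inter hA_borel)))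
      (fun _ => hinv _))
  have hs₂_M : MeasurableSet[invariantSets inferInstance (fun _ : Unit => torusTranslation) ⊔
      MeasurableSpace.generateFrom
        {⇑(torusAut ^ ℓ) ⁻¹' torusHalf₁, ⇑(torusAut ^ ℓ) ⁻¹' torusHalf₂}]
      ((s ∩ (⇑(torusAut ^ ℓ) ⁻¹' torusHalf₁)ᶜ) ∪
        torusTranslation ⁻¹' (s ∩ (⇑(torusAut ^ ℓ) ⁻¹' torusHalf₁)ᶜ)) :=
    measurableSet_of_le le_sup_left (invariantSets_measurableSet
      ((hs.inter hA_borel.compl).union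
        (measurable_torusTranslation (hs.inter hA_borel.compl)))
      (fun _ => hinv _))
  have hmemA : ∀ x, torusTranslation x ∈ ⇑(torusAut ^ ℓ) ⁻¹' torusHalf₁ ↔
      x ∉ ⇑(torusAut ^ ℓ) ⁻¹' torusHalf₁ := by
    intro x
    rw [← Set.mem_preimage, hAτ, Set.mem_compl_iff]
  have hdecomp : s =
      (((s ∩ ⇑(torusAut ^ ℓ) ⁻¹' torusHalf₁) ∪
          torusTranslation ⁻¹' (s ∩ ⇑(torusAut ^ ℓ) ⁻¹' torusHalf₁)) ∩
        ⇑(torusAut ^ ℓ) ⁻¹' torusHalf₁) ∪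
      (((s ∩ (⇑(torusAut ^ ℓ) ⁻¹' torusHalf₁)ᶜ) ∪
          torusTranslation ⁻¹' (s ∩ (⇑(torusAut ^ ℓ) ⁻¹' torusHalf₁)ᶜ)) ∩
        (⇑(torusAut ^ ℓ) ⁻¹' torusHalf₁)ᶜ) := by
    ext x
    by_cases hxA : x ∈ ⇑(torusAut ^ ℓ) ⁻¹' torusHalf₁ <;>
      simp only [Set.mem_union, Set.mem_inter_iff, Set.mem_preimage,
        Set.mem_compl_iff, hmemA x] <;>
      simp only [← Set.mem_preimage, hxA] <;> tauto
  rw [hdecomp]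
  exact MeasurableSet.union (hs₁_M.inter hA_M) (hs₂_M.inter hA_M.compl)
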